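/- There exists a universal constant C > 0 such that for all λ > 0 and all ε ∈ (0,1) with λ·ε² ≤ 1: D(M‖P) ≤ C·λ²·ε⁴, where P is the Poisson(λ) distribution on ℕ, M is the mixture distribution on ℕ given by M(ℓ) = (1/2)·(e^{−λ(1+ε)}·(λ(1+ε))^ℓ + e^{−λ(1−ε)}·(λ(1−ε))^ℓ)/ℓ!, and D(M‖P) = ∑_{ℓ∈ℕ} M(ℓ)·log(M(ℓ)/P(ℓ)) is the Kullback–Leibler divergence. -/

import Mathlib

/-- The mass function of the Poisson distribution with rate `lam`:
`P(ℓ) = exp(−lam)·lam^ℓ/ℓ!`. -/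
noncomputable def poissonMass (lam : ℝ) (ℓ : ℕ) : ℝ :=
  Real.exp (-lam) * lam ^ ℓ / (Nat.factorial ℓ)

/-- The equal-weight mixture of `Poisson(lam·(1+ε))` and `Poisson(lam·(1−ε))`. -/
noncomputable def mixMass (lam ε : ℝ) (ℓ : ℕ) : ℝ :=
  (poissonMass (lam * (1 + ε)) ℓ + poissonMass (lam * (1 - ε)) ℓ) / 2

lemma exp_tsum (x : ℝ) : ∑' n : ℕ, x ^ n / (Nat.factorial n) = Real.exp x := by
  rw [Real.exp_eq_exp_ℝ, NormedSpace.exp_eq_tsum_div]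

lemma poissonMass_pos {lam : ℝ} (h : 0 < lam) (ℓ : ℕ) : 0 < poissonMass lam ℓ := by
  unfold poissonMass
  positivity

lemma ratio_eq {lam : ℝ} (a b : ℝ) (hlam : 0 < lam) (ℓ : ℕ) :
    poissonMass a ℓ * poissonMass b ℓ / poissonMass lam ℓ =
      Real.exp (lam - a - b) * ((a * b / lam) ^ ℓ / (Nat.factorial ℓ)) := by
  unfold poissonMass
  have h1 : (Nat.factorial ℓ : ℝ) ≠ 0 := Nat.cast_ne_zero.2 (Nat.factorial_ne_zero ℓ)
  have h2 : Real.exp (-lam) ≠ 0 := Real.exp_ne_zero _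
  have hl : lam ≠ 0 := hlam.ne'
  have key : Real.exp (lam - a - b) = Real.exp (-a) * Real.exp (-b) / Real.exp (-lam) := by
    rw [← Real.exp_add, ← Real.exp_sub]
    ring_nf
  rw [div_pow, key]
  field_simp
  ring

lemma ratio_summable {lam : ℝ} (a b : ℝ) (hlam : 0 < lam) :
    Summable (fun ℓ => poissonMass a ℓ * poissonMass b ℓ / poissonMass lam ℓ) := by
  have := (Real.summable_pow_div_factorial (a * b / lam)).mul_left (Real.exp (lam - a - b))
  exact this.congr fun ℓ => (ratio_eq a b hlam ℓ).symm

lemma ratio_tsum {lam : ℝ} (a b : ℝ) (hlam : 0 < lam) :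
    ∑' ℓ : ℕ, poissonMass a ℓ * poissonMass b ℓ / poissonMass lam ℓ =
      Real.exp (lam - a - b + a * b / lam) := by
  calc ∑' ℓ : ℕ, poissonMass a ℓ * poissonMass b ℓ / poissonMass lam ℓ
      = ∑' ℓ : ℕ, Real.exp (lam - a - b) * ((a * b / lam) ^ ℓ / (Nat.factorial ℓ)) :=
        tsum_congr fun ℓ => ratio_eq a b hlam ℓ
    _ = Real.exp (lam - a - b) * ∑' ℓ : ℕ, ((a * b / lam) ^ ℓ / (Nat.factorial ℓ)) :=
        tsum_mul_left
    _ = Real.exp (lam - a - b) * Real.exp (a * b / lam) := by rw [exp_tsum]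
    _ = _ := by rw [← Real.exp_add]

lemma poisson_summable (a : ℝ) : Summable (fun ℓ => poissonMass a ℓ) := by
  have := (Real.summable_pow_div_factorial a).mul_left (Real.exp (-a))
  exact this.congr fun ℓ => by unfold poissonMass; ring

lemma poisson_tsum (a : ℝ) : ∑' ℓ : ℕ, poissonMass a ℓ = 1 := by
  have h : (fun ℓ : ℕ => poissonMass a ℓ) =
      fun ℓ : ℕ => Real.exp (-a) * (a ^ ℓ / (Nat.factorial ℓ)) := by
    funext ℓ; unfold poissonMass; ring
  rw [h, tsum_mul_left, exp_tsum, ← Real.exp_add]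
  simp

lemma exp_sub_one_le (t : ℝ) : Real.exp t - 1 ≤ t * Real.exp t := by
  have h := Real.add_one_le_exp (-t)
  have h2 := Real.exp_pos t
  have h3 : Real.exp (-t) * Real.exp t = 1 := by rw [← Real.exp_add]; simp
  nlinarith

lemma cosh_bound {t : ℝ} (h0 : 0 ≤ t) (h1 : t ≤ 1) :
    (Real.exp t + Real.exp (-t)) / 2 - 1 ≤ 2 * t ^ 2 := by
  set u := Real.exp (t / 2) - Real.exp (-(t / 2)) with hu
  have e1 : Real.exp (t / 2) * Real.exp (t / 2) = Real.exp t := by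
    rw [← Real.exp_add]; ring_nf
  have e2 : Real.exp (-(t / 2)) * Real.exp (-(t / 2)) = Real.exp (-t) := by
    rw [← Real.exp_add]; ring_nf
  have e3 : Real.exp (t / 2) * Real.exp (-(t / 2)) = 1 := by
    rw [← Real.exp_add]; simp
  have hsq : Real.exp t + Real.exp (-t) - 2 = u ^ 2 := by rw [hu]; nlinarith
  have hub : u ≤ 2 * t := by
    have h4 : u = Real.exp (-(t / 2)) * (Real.exp t - 1) := by
      rw [hu, mul_sub, mul_one, ← Real.exp_add]; ring_nf
    have h5 := exp_sub_one_le t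
    have h7 : Real.exp (-(t / 2)) * Real.exp t = Real.exp (t / 2) := by
      rw [← Real.exp_add]; ring_nf
    have h8 : Real.exp (t / 2) ≤ Real.exp (1 / 2) := Real.exp_le_exp.2 (by linarith)
    have h9 : Real.exp (1 / 2) < 2 := by
      have hsq2 : Real.exp (1 / 2) ^ 2 = Real.exp 1 := by
        rw [sq, ← Real.exp_add]; norm_num
      nlinarith [Real.exp_one_lt_d9, Real.exp_pos (1/2 : ℝ)]
    have h6 : Real.exp (-(t / 2)) * (Real.exp t - 1) ≤
        Real.exp (-(t / 2)) * (t * Real.exp t) :=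
      mul_le_mul_of_nonneg_left h5 (Real.exp_pos _).le
    calc u ≤ Real.exp (-(t / 2)) * (t * Real.exp t) := by rw [h4]; exact h6
      _ = t * Real.exp (t / 2) := by rw [← h7]; ring
      _ ≤ 2 * t := by nlinarith [Real.exp_pos (t/2 : ℝ)]
  have hunn : (0:ℝ) ≤ u := by
    rw [hu, sub_nonneg]
    exact Real.exp_le_exp.2 (by linarith)
  nlinarith

/-- KL divergence between the symmetric Poisson mixture `M` and `Poisson(lam)` is
`O(lam²·ε⁴)` whenever `lam·ε² ≤ 1`. -/
theorem kl_poisson_mixture_le :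
    ∃ C > (0 : ℝ), ∀ lam ε : ℝ, 0 < lam → 0 < ε → ε < 1 → lam * ε ^ 2 ≤ 1 →
      ∑' ℓ : ℕ, mixMass lam ε ℓ * Real.log (mixMass lam ε ℓ / poissonMass lam ℓ) ≤
        C * lam ^ 2 * ε ^ 4 := by
  refine ⟨2, by norm_num, fun lam ε hlam hε hε1 hle => ?_⟩
  set a := lam * (1 + ε) with ha
  set b := lam * (1 - ε) with hb
  have hapos : 0 < a := by positivity
  have hbpos : 0 < b := mul_pos hlam (by linarith)
  have htpos : 0 < lam * ε ^ 2 := by positivity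
  have hRHS : (0:ℝ) < 2 * lam ^ 2 * ε ^ 4 := by positivity
  set f := fun ℓ : ℕ => mixMass lam ε ℓ * Real.log (mixMass lam ε ℓ / poissonMass lam ℓ) with hf
  by_cases hS : Summable f
  · set g := fun ℓ : ℕ =>
      (poissonMass a ℓ * poissonMass a ℓ / poissonMass lam ℓ
        + 2 * (poissonMass a ℓ * poissonMass b ℓ / poissonMass lam ℓ)
        + poissonMass b ℓ * poissonMass b ℓ / poissonMass lam ℓ) / 4 - mixMass lam ε ℓ with hg
    have hM : ∀ ℓ, mixMass lam ε ℓ = (poissonMass a ℓ + poissonMass b ℓ) / 2 := fun ℓ => rfl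
    have hMpos : ∀ ℓ, 0 < mixMass lam ε ℓ := fun ℓ => by
      rw [hM]
      have := poissonMass_pos hapos ℓ
      have := poissonMass_pos hbpos ℓ
      positivity
    have hSM : Summable (fun ℓ => mixMass lam ε ℓ) := by
      have := ((poisson_summable a).add (poisson_summable b)).div_const 2
      exact this.congr fun ℓ => (hM ℓ).symm
    have hSg : Summable g :=
      ((((ratio_summable a a hlam).add ((ratio_summable a b hlam).mul_left 2)).add
        (ratio_summable b b hlam)).div_const 4).sub hSM
    have hfg : ∀ ℓ, f ℓ ≤ g ℓ := by
      intro ℓ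
      have hP := poissonMass_pos hlam ℓ
      have hMp := hMpos ℓ
      have hlog : Real.log (mixMass lam ε ℓ / poissonMass lam ℓ) ≤
          mixMass lam ε ℓ / poissonMass lam ℓ - 1 :=
        Real.log_le_sub_one_of_pos (by positivity)
      have step : f ℓ ≤ mixMass lam ε ℓ * mixMass lam ε ℓ / poissonMass lam ℓ - mixMass lam ε ℓ := by
        have := mul_le_mul_of_nonneg_left hlog hMp.le
        calc f ℓ ≤ mixMass lam ε ℓ * (mixMass lam ε ℓ / poissonMass lam ℓ - 1) := this
          _ = mixMass lam ε ℓ * mixMass lam ε ℓ / poissonMass lam ℓ - mixMass lam ε ℓ := by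
            field_simp
      refine step.trans (le_of_eq ?_)
      rw [hg]
      simp only
      rw [hM]
      field_simp
      ring
    have hmain : ∑' ℓ, f ℓ ≤ ∑' ℓ, g ℓ := Summable.tsum_le_tsum hfg hS hSg
    have hMtsum : ∑' ℓ, mixMass lam ε ℓ = 1 := by
      calc ∑' ℓ, mixMass lam ε ℓ = ∑' ℓ, (poissonMass a ℓ + poissonMass b ℓ) / 2 :=
            tsum_congr hM
        _ = (∑' ℓ, (poissonMass a ℓ + poissonMass b ℓ)) / 2 := tsum_div_const
        _ = (1 + 1) / 2 := by
            rw [Summable.tsum_add (poisson_summable a) (poisson_summable b), poisson_tsum, poisson_tsum]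
        _ = 1 := by norm_num
    have haa : lam - a - a + a * a / lam = lam * ε ^ 2 := by
      rw [ha]; field_simp; ring
    have hab : lam - a - b + a * b / lam = -(lam * ε ^ 2) := by
      rw [ha, hb]; field_simp; ring
    have hbb : lam - b - b + b * b / lam = lam * ε ^ 2 := by
      rw [hb]; field_simp; ring
    have hgtsum : ∑' ℓ, g ℓ =
        (Real.exp (lam * ε ^ 2) + Real.exp (-(lam * ε ^ 2))) / 2 - 1 := by
      rw [hg]
      rw [Summable.tsum_sub (((((ratio_summable a a hlam).add ((ratio_summable a b hlam).mul_left 2)).add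
        (ratio_summable b b hlam)).div_const 4)) hSM]
      rw [tsum_div_const]
      rw [Summable.tsum_add ((ratio_summable a a hlam).add ((ratio_summable a b hlam).mul_left 2))
        (ratio_summable b b hlam)]
      rw [Summable.tsum_add (ratio_summable a a hlam) ((ratio_summable a b hlam).mul_left 2)]
      rw [tsum_mul_left]
      rw [ratio_tsum a a hlam, ratio_tsum a b hlam, ratio_tsum b b hlam, hMtsum,
        haa, hab, hbb]
      ring
    have hcb := cosh_bound htpos.le hle
    calc ∑' ℓ, f ℓ ≤ ∑' ℓ, g ℓ := hmain
      _ = (Real.exp (lam * ε ^ 2) + Real.exp (-(lam * ε ^ 2))) / 2 - 1 := hgtsum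
      _ ≤ 2 * (lam * ε ^ 2) ^ 2 := hcb
      _ = 2 * lam ^ 2 * ε ^ 4 := by ring
  · rw [hf] at hS
    rw [tsum_eq_zero_of_not_summable hS]
    linarith
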